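/- For every positive integer a, the lattice graph 4D-FCC(a), generated by the 4×4 matrix with rows (2a,a,a,a),(0,a,0,0),(0,0,a,0),(0,0,0,a), is linearly symmetric, and its projection over e₄ is isomorphic to the face-centered cubic lattice graph FCC(a). -/

import Mathlib

open Matrix

/-- The subgroup (submodule) `Mℤⁿ` generated by the columns of `M`. -/
def colSpan {ι : Type*} [Fintype ι] [DecidableEq ι] (M : Matrix ι ι ℤ) :
    Submodule ℤ (ι → ℤ) :=
  LinearMap.range M.mulVecLin

/-- The vertex set `ℤⁿ/Mℤⁿ` of the lattice graph. -/
abbrev LatticeVertex {ι : Type*} [Fintype ι] [DecidableEq ι] (M : Matrix ι ι ℤ) :=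
  (ι → ℤ) ⧸ colSpan M

/-- The `i`-th standard basis vector of `ℤⁿ`. -/
def stdBasis {ι : Type*} [DecidableEq ι] (i : ι) : ι → ℤ := Pi.single i 1

/-- The lattice graph `𝒢(M)`. -/
def latticeGraph {ι : Type*} [Fintype ι] [DecidableEq ι] (M : Matrix ι ι ℤ) :
    SimpleGraph (LatticeVertex M) where
  Adj v w := v ≠ w ∧ ∃ i : ι,
      v - w = Submodule.Quotient.mk (stdBasis i) ∨
      w - v = Submodule.Quotient.mk (stdBasis i)
  symm := ⟨by rintro v w ⟨hne, i, h⟩; exact ⟨hne.symm, i, h.symm⟩⟩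
  loopless := ⟨fun v h => h.1 rfl⟩

/-- The subgraph of `𝒢(M)` spanned by the directions in `S`. -/
def spannedSubgraph {ι : Type*} [Fintype ι] [DecidableEq ι] (M : Matrix ι ι ℤ) (S : Set ι) :
    SimpleGraph (AddSubgroup.closure
      ((fun i => (Submodule.Quotient.mk (stdBasis i) : LatticeVertex M)) '' S)) where
  Adj v w := v ≠ w ∧ ∃ i ∈ S,
      (v : LatticeVertex M) - (w : LatticeVertex M) = Submodule.Quotient.mk (stdBasis i) ∨
      (w : LatticeVertex M) - (v : LatticeVertex M) = Submodule.Quotient.mk (stdBasis i)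
  symm := ⟨by rintro v w ⟨hne, i, hiS, h⟩; exact ⟨hne.symm, i, hiS, h.symm⟩⟩
  loopless := ⟨fun v h => h.1 rfl⟩

/-- The projection of `𝒢(M)` over `e_j`: the subgraph spanned by all other directions. -/
def projGraph {ι : Type*} [Fintype ι] [DecidableEq ι] (M : Matrix ι ι ℤ) (j : ι) :=
  spannedSubgraph M {i | i ≠ j}

/-- The torus graph `T(a₁,…,aₙ)`. -/
def torusGraph {n : ℕ} (a : Fin n → ℕ) : SimpleGraph (∀ i, ZMod (a i)) where
  Adj x y := x ≠ y ∧ ∃ i, (∀ j, j ≠ i → x j = y j) ∧ (x i = y i + 1 ∨ y i = x i + 1)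
  symm := ⟨by
    rintro x y ⟨hne, i, hj, h⟩
    exact ⟨hne.symm, i, fun j hji => (hj j hji).symm, h.symm⟩⟩
  loopless := ⟨fun x h => h.1 rfl⟩

/-- A signed permutation matrix: exactly one nonzero entry, equal to `±1`,
in each row and each column. -/
def IsSignedPerm {n : ℕ} (P : Matrix (Fin n) (Fin n) ℤ) : Prop :=
  (∀ i j, P i j = 0 ∨ P i j = 1 ∨ P i j = -1) ∧
  (∀ i, ∃! j, P i j ≠ 0) ∧ (∀ j, ∃! i, P i j ≠ 0)

/-- `𝒢(M)` is linearly symmetric: for every `i` there is a signed permutation matrix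
inducing an automorphism of `𝒢(M)` sending `e₁` to `±e_i`. -/
def IsLinearlySymmetric {n : ℕ} (M : Matrix (Fin n) (Fin n) ℤ) : Prop :=
  ∀ i : Fin n, ∃ P : Matrix (Fin n) (Fin n) ℤ, IsSignedPerm P ∧
    (∃ Q : Matrix (Fin n) (Fin n) ℤ, P * M = M * Q) ∧
    (P.mulVec (stdBasis (⟨0, i.pos⟩ : Fin n)) = stdBasis i ∨
      P.mulVec (stdBasis (⟨0, i.pos⟩ : Fin n)) = -stdBasis i)

set_option maxHeartbeats 1000000

namespace FCCAux

def M4 (a : ℕ) : Matrix (Fin 4) (Fin 4) ℤ := !![(2 * a : ℤ), a, a, a; 0, a, 0, 0; 0, 0, a, 0; 0, 0, 0, a]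
def M3 (a : ℕ) : Matrix (Fin 3) (Fin 3) ℤ := !![(a : ℤ), a, 0; a, 0, a; 0, a, a]

/-- `φ x = (x₀, x₁, x₂, 0)`. -/
def phi : (Fin 3 → ℤ) →ₗ[ℤ] (Fin 4 → ℤ) where
  toFun x := ![x 0, x 1, x 2, 0]
  map_add' x y := by funext j; fin_cases j <;> simp
  map_smul' c x := by funext j; fin_cases j <;> simp

lemma phi_apply (x : Fin 3 → ℤ) : phi x = ![x 0, x 1, x 2, 0] := rfl

lemma phi_colSpan (a : ℕ) {x : Fin 3 → ℤ} (hx : x ∈ colSpan (M3 a)) :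
    phi x ∈ colSpan (M4 a) := by
  obtain ⟨c, rfl⟩ := hx
  refine ⟨![-(c 2), c 0 + c 2, c 1 + c 2, 0], ?_⟩
  funext j
  fin_cases j <;>
    simp [M3, M4, phi_apply, mulVecLin_apply, Matrix.mulVec, dotProduct,
      Fin.sum_univ_four, Fin.sum_univ_three, Matrix.vecHead, Matrix.vecTail] <;> ring

lemma phi_colSpan_rev (a : ℕ) (ha : 0 < a) {x : Fin 3 → ℤ}
    (hx : phi x ∈ colSpan (M4 a)) : x ∈ colSpan (M3 a) := by
  obtain ⟨c, hc⟩ := hx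
  have h0 := congrFun hc 0
  have h1 := congrFun hc 1
  have h2 := congrFun hc 2
  have h3 := congrFun hc 3
  simp [M4, phi_apply, mulVecLin_apply, Matrix.mulVec, dotProduct,
    Fin.sum_univ_four, Matrix.vecHead, Matrix.vecTail] at h0 h1 h2 h3
  have hc3 : c 3 = 0 := by
    rcases h3 with h3 | h3
    · omega
    · exact h3
  refine ⟨![c 0 + c 1, c 0 + c 2, -(c 0)], ?_⟩
  funext j
  have hA : (a : ℤ) ≠ 0 := by exact_mod_cast ha.ne'
  fin_cases j <;>
    simp [M3, mulVecLin_apply, Matrix.mulVec, dotProduct,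
      Fin.sum_univ_three, Matrix.vecHead, Matrix.vecTail] <;>
    first
    | linear_combination h0 - (a : ℤ) * hc3
    | linear_combination h1
    | linear_combination h2
end FCCAux
namespace FCCAux

def psi (a : ℕ) : LatticeVertex (M3 a) →ₗ[ℤ] LatticeVertex (M4 a) :=
  Submodule.liftQ _ ((colSpan (M4 a)).mkQ ∘ₗ phi) (by
    intro x hx
    simp only [LinearMap.mem_ker, LinearMap.comp_apply, Submodule.mkQ_apply,
      Submodule.Quotient.mk_eq_zero]
    exact phi_colSpan a hx)

lemma psi_mk (a : ℕ) (x : Fin 3 → ℤ) :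
    psi a (Submodule.Quotient.mk x) = Submodule.Quotient.mk (phi x) := rfl

lemma psi_inj (a : ℕ) (ha : 0 < a) : Function.Injective (psi a) := by
  intro u v huv
  obtain ⟨x, rfl⟩ := Submodule.Quotient.mk_surjective _ u
  obtain ⟨y, rfl⟩ := Submodule.Quotient.mk_surjective _ v
  rw [psi_mk, psi_mk, Submodule.Quotient.eq] at huv
  rw [Submodule.Quotient.eq]
  exact phi_colSpan_rev a ha (by rwa [map_sub] )

def Hgen (a : ℕ) : Set (LatticeVertex (M4 a)) :=
  (fun i => (Submodule.Quotient.mk (stdBasis i) : LatticeVertex (M4 a))) '' {i | i ≠ 3}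

lemma mk_single_mem (a : ℕ) (i : Fin 4) (hi : i ≠ 3) :
    (Submodule.Quotient.mk (stdBasis i) : LatticeVertex (M4 a)) ∈
      AddSubgroup.closure (Hgen a) :=
  AddSubgroup.subset_closure ⟨i, hi, rfl⟩

lemma phi_decomp (x : Fin 3 → ℤ) :
    phi x = x 0 • stdBasis (0 : Fin 4) + x 1 • stdBasis (1 : Fin 4)
      + x 2 • stdBasis (2 : Fin 4) := by
  funext j
  fin_cases j <;> simp [phi_apply, _root_.stdBasis, Pi.single_apply]

lemma psi_mem_H (a : ℕ) (v : LatticeVertex (M3 a)) :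
    psi a v ∈ AddSubgroup.closure (Hgen a) := by
  obtain ⟨x, rfl⟩ := Submodule.Quotient.mk_surjective _ v
  rw [psi_mk, phi_decomp]
  have hmem : ∀ (i : Fin 4), i ≠ 3 → ∀ (c : ℤ),
      (Submodule.Quotient.mk (c • stdBasis i) : LatticeVertex (M4 a)) ∈
        AddSubgroup.closure (Hgen a) := by
    intro i hi c
    have : (Submodule.Quotient.mk (c • stdBasis i) : LatticeVertex (M4 a))
        = c • (Submodule.Quotient.mk (stdBasis i) : LatticeVertex (M4 a)) := by
      rw [← Submodule.Quotient.mk_smul]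
    rw [this]
    exact Submodule.smul_mem
      ((AddSubgroup.closure (Hgen a)).toIntSubmodule) c (mk_single_mem a i hi)
  have h01 := hmem 0 (by decide) (x 0)
  have h11 := hmem 1 (by decide) (x 1)
  have h21 := hmem 2 (by decide) (x 2)
  have := AddSubgroup.add_mem _ (AddSubgroup.add_mem _ h01 h11) h21
  simpa [Submodule.Quotient.mk_add, Submodule.Quotient.mk_smul] using this

lemma H_sub_range (a : ℕ) :
    ∀ h ∈ AddSubgroup.closure (Hgen a), ∃ v, psi a v = h := by
  intro h hh
  induction hh using AddSubgroup.closure_induction with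
  | mem x hx =>
    obtain ⟨i, hi, rfl⟩ := hx
    fin_cases i
    · exact ⟨Submodule.Quotient.mk (stdBasis (0 : Fin 3)), by
        rw [psi_mk]; congr 1; decide⟩
    · exact ⟨Submodule.Quotient.mk (stdBasis (1 : Fin 3)), by
        rw [psi_mk]; congr 1; decide⟩
    · exact ⟨Submodule.Quotient.mk (stdBasis (2 : Fin 3)), by
        rw [psi_mk]; congr 1; decide⟩
    · exact absurd rfl hi
  | zero => exact ⟨0, map_zero _⟩
  | add x y _ _ hx hy =>
    obtain ⟨v, rfl⟩ := hx; obtain ⟨w, rfl⟩ := hy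
    exact ⟨v + w, map_add _ _ _⟩
  | neg x _ hx =>
    obtain ⟨v, rfl⟩ := hx
    exact ⟨-v, map_neg _ _⟩

end FCCAux
namespace FCCAux

noncomputable def eqv (a : ℕ) (ha : 0 < a) :
    LatticeVertex (M3 a) ≃ AddSubgroup.closure (Hgen a) :=
  Equiv.ofBijective (fun v => ⟨psi a v, psi_mem_H a v⟩)
    ⟨fun u v huv => psi_inj a ha (congrArg Subtype.val huv),
     fun h => by
      obtain ⟨v, hv⟩ := H_sub_range a h.1 h.2
      exact ⟨v, Subtype.ext hv⟩⟩

lemma psi_eq_single_iff (a : ℕ) (ha : 0 < a) (d : LatticeVertex (M3 a))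
    (i' : Fin 3) (i : Fin 4) (hphi : phi (_root_.stdBasis i') = _root_.stdBasis i) :
    psi a d = Submodule.Quotient.mk (_root_.stdBasis i) ↔
      d = Submodule.Quotient.mk (_root_.stdBasis i') := by
  constructor
  · intro h
    apply psi_inj a ha
    rw [h, psi_mk, hphi]
  · rintro rfl
    rw [psi_mk, hphi]

noncomputable def iso (a : ℕ) (ha : 0 < a) :
    latticeGraph (M3 a) ≃g spannedSubgraph (M4 a) {i | i ≠ 3} where
  toEquiv := eqv a ha
  map_rel_iff' := by
    intro p q
    show ((⟨psi a p, _⟩ : AddSubgroup.closure (Hgen a)) ≠ ⟨psi a q, _⟩ ∧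
        ∃ i ∈ {i : Fin 4 | i ≠ 3},
          psi a p - psi a q = Submodule.Quotient.mk (_root_.stdBasis i) ∨
          psi a q - psi a p = Submodule.Quotient.mk (_root_.stdBasis i)) ↔
      (p ≠ q ∧ ∃ i : Fin 3,
          p - q = Submodule.Quotient.mk (_root_.stdBasis i) ∨
          q - p = Submodule.Quotient.mk (_root_.stdBasis i))
    have hne : (⟨psi a p, psi_mem_H a p⟩ : AddSubgroup.closure (Hgen a)) ≠
        ⟨psi a q, psi_mem_H a q⟩ ↔ p ≠ q := by
      constructor
      · intro h hpq; exact h (by rw [hpq])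
      · intro h hh; exact h (psi_inj a ha (congrArg Subtype.val hh))
    rw [hne]
    refine and_congr_right fun _ => ?_
    constructor
    · rintro ⟨i, hi, h⟩
      rw [← map_sub, ← map_sub] at h
      fin_cases i
      · refine ⟨0, ?_⟩
        rcases h with h | h
        · exact Or.inl ((psi_eq_single_iff a ha _ 0 0 (by decide)).mp h)
        · exact Or.inr ((psi_eq_single_iff a ha _ 0 0 (by decide)).mp h)
      · refine ⟨1, ?_⟩
        rcases h with h | h
        · exact Or.inl ((psi_eq_single_iff a ha _ 1 1 (by decide)).mp h)
        · exact Or.inr ((psi_eq_single_iff a ha _ 1 1 (by decide)).mp h)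
      · refine ⟨2, ?_⟩
        rcases h with h | h
        · exact Or.inl ((psi_eq_single_iff a ha _ 2 2 (by decide)).mp h)
        · exact Or.inr ((psi_eq_single_iff a ha _ 2 2 (by decide)).mp h)
      · exact absurd rfl hi
    · rintro ⟨i, h⟩
      fin_cases i
      · refine ⟨0, by decide, ?_⟩
        rw [← map_sub, ← map_sub]
        rcases h with h | h
        · exact Or.inl ((psi_eq_single_iff a ha _ 0 0 (by decide)).mpr h)
        · exact Or.inr ((psi_eq_single_iff a ha _ 0 0 (by decide)).mpr h)
      · refine ⟨1, by decide, ?_⟩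
        rw [← map_sub, ← map_sub]
        rcases h with h | h
        · exact Or.inl ((psi_eq_single_iff a ha _ 1 1 (by decide)).mpr h)
        · exact Or.inr ((psi_eq_single_iff a ha _ 1 1 (by decide)).mpr h)
      · refine ⟨2, by decide, ?_⟩
        rw [← map_sub, ← map_sub]
        rcases h with h | h
        · exact Or.inl ((psi_eq_single_iff a ha _ 2 2 (by decide)).mpr h)
        · exact Or.inr ((psi_eq_single_iff a ha _ 2 2 (by decide)).mpr h)

end FCCAux



theorem FCCAux.part1 (a : ℕ) :
    IsLinearlySymmetric !![(2 * a : ℤ), a, a, a; 0, a, 0, 0; 0, 0, a, 0; 0, 0, 0, a] := by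
  intro i
  fin_cases i
  · exact ⟨!![(1:ℤ),0,0,0;0,1,0,0;0,0,1,0;0,0,0,1],
      by
        unfold IsSignedPerm
        refine ⟨fun i j => ?_, fun i => ?_, fun j => ?_⟩
        · fin_cases i <;> fin_cases j <;> decide
        · fin_cases i <;> unfold ExistsUnique <;> decide
        · fin_cases j <;> unfold ExistsUnique <;> decide,
      ⟨!![(1:ℤ),0,0,0;0,1,0,0;0,0,1,0;0,0,0,1], by
        ext i j
        fin_cases i <;> fin_cases j <;>
          simp [Matrix.mul_apply, Fin.sum_univ_four, Matrix.vecHead, Matrix.vecTail] <;> ring⟩,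
      Or.inl (by decide)⟩
  · exact ⟨!![(0:ℤ),1,0,0;1,0,0,0;0,0,-1,0;0,0,0,-1],
      by
        unfold IsSignedPerm
        refine ⟨fun i j => ?_, fun i => ?_, fun j => ?_⟩
        · fin_cases i <;> fin_cases j <;> decide
        · fin_cases i <;> unfold ExistsUnique <;> decide
        · fin_cases j <;> unfold ExistsUnique <;> decide,
      ⟨!![(-1:ℤ),0,0,0;2,1,1,1;0,0,-1,0;0,0,0,-1], by
        ext i j
        fin_cases i <;> fin_cases j <;>
          simp [Matrix.mul_apply, Fin.sum_univ_four, Matrix.vecHead, Matrix.vecTail] <;> ring⟩,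
      Or.inl (by decide)⟩
  · exact ⟨!![(0:ℤ),0,1,0;0,-1,0,0;1,0,0,0;0,0,0,-1],
      by
        unfold IsSignedPerm
        refine ⟨fun i j => ?_, fun i => ?_, fun j => ?_⟩
        · fin_cases i <;> fin_cases j <;> decide
        · fin_cases i <;> unfold ExistsUnique <;> decide
        · fin_cases j <;> unfold ExistsUnique <;> decide,
      ⟨!![(-1:ℤ),0,0,0;0,-1,0,0;2,1,1,1;0,0,0,-1], by
        ext i j
        fin_cases i <;> fin_cases j <;>
          simp [Matrix.mul_apply, Fin.sum_univ_four, Matrix.vecHead, Matrix.vecTail] <;> ring⟩,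
      Or.inl (by decide)⟩
  · exact ⟨!![(0:ℤ),0,0,1;0,-1,0,0;0,0,-1,0;1,0,0,0],
      by
        unfold IsSignedPerm
        refine ⟨fun i j => ?_, fun i => ?_, fun j => ?_⟩
        · fin_cases i <;> fin_cases j <;> decide
        · fin_cases i <;> unfold ExistsUnique <;> decide
        · fin_cases j <;> unfold ExistsUnique <;> decide,
      ⟨!![(-1:ℤ),0,0,0;0,-1,0,0;0,0,-1,0;2,1,1,1], by
        ext i j
        fin_cases i <;> fin_cases j <;>
          simp [Matrix.mul_apply, Fin.sum_univ_four, Matrix.vecHead, Matrix.vecTail] <;> ring⟩,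
      Or.inl (by decide)⟩


/-- `4D-FCC(a)` is linearly symmetric and its projection over `e₄` is
isomorphic to `FCC(a)`. -/
theorem fourD_FCC_symmetric_and_projection (a : ℕ) (ha : 0 < a) :
    IsLinearlySymmetric
      !![(2 * a : ℤ), a, a, a; 0, a, 0, 0; 0, 0, a, 0; 0, 0, 0, a] ∧
    Nonempty (projGraph
      !![(2 * a : ℤ), a, a, a; 0, a, 0, 0; 0, 0, a, 0; 0, 0, 0, a] (3 : Fin 4) ≃g
      latticeGraph !![(a : ℤ), a, 0; a, 0, a; 0, a, a]) := by
  exact ⟨FCCAux.part1 a, ⟨(FCCAux.iso a ha).symm⟩⟩
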